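/- Let 𝒜 ⊆ ℝ² be the closed unit Euclidean ball, let P : ℝ² → 𝒜 be the metric projection onto 𝒜 (so P(w) = w/‖w‖ for ‖w‖ > 1 and P(w) = w for ‖w‖ ≤ 1), let c = (0, 1/2), and define φ : ℝ² → ℝ by φ(w) = ‖P(w) − c‖². Then φ is differentiable at every w with ‖w‖ > 1, and its gradient is orthogonal to w there: ⟨∇φ(w), w⟩ = 0 for all w with ‖w‖ > 1. -/

import Mathlib

open scoped RealInnerProductSpace

/-- The metric projection onto the closed unit Euclidean ball in `ℝ²`:
`P(w) = w` for `‖w‖ ≤ 1` and `P(w) = w/‖w‖` otherwise. -/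
noncomputable def projBall (w : EuclideanSpace ℝ (Fin 2)) : EuclideanSpace ℝ (Fin 2) :=
  if ‖w‖ ≤ 1 then w else ‖w‖⁻¹ • w

/-- The target point `c = (0, 1/2)`. -/
noncomputable def cTarget : EuclideanSpace ℝ (Fin 2) :=
  EuclideanSpace.single (1 : Fin 2) ((1 : ℝ) / 2)

/-- The expected loss of the projection-layer decision map:
`φ(w) = ‖P(w) − c‖²`. -/
noncomputable def phiProj (w : EuclideanSpace ℝ (Fin 2)) : ℝ :=
  ‖projBall w - cTarget‖ ^ 2

/-- **Gradient projection phenomenon (Section 4.4): orthogonality of the gradient.**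
The loss `φ(w) = ‖P(w) − (0, 1/2)‖²` of a decision map with a projection output layer
is differentiable at every infeasible point `‖w‖ > 1`, and there its gradient is
orthogonal to `w`: `⟪∇φ(w), w⟫ = 0`. -/
theorem gradient_projection_orthogonal :
    ∀ w : EuclideanSpace ℝ (Fin 2), 1 < ‖w‖ →
      DifferentiableAt ℝ phiProj w ∧ (inner ℝ (gradient phiProj w) w : ℝ) = 0 := by
  intro w hw
  have hw0 : w ≠ 0 := by
    intro h; rw [h, norm_zero] at hw; linarith
  -- local expression
  have heq : phiProj =ᶠ[nhds w] fun v => ‖(‖v‖⁻¹ • v) - cTarget‖ ^ 2 := by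
    have : ∀ᶠ v in nhds w, 1 < ‖v‖ :=
      (continuous_norm.continuousAt : Filter.Tendsto _ _ (nhds ‖w‖)).eventually
        (eventually_gt_nhds hw)
    filter_upwards [this] with v hv
    simp [phiProj, projBall, not_le.mpr hv]
  have hdiff2 : DifferentiableAt ℝ (fun v : EuclideanSpace ℝ (Fin 2) =>
      ‖(‖v‖⁻¹ • v) - cTarget‖ ^ 2) w := by
    have hn : DifferentiableAt ℝ (fun v : EuclideanSpace ℝ (Fin 2) => ‖v‖) w :=
      (contDiffAt_norm (𝕜 := ℝ) hw0).differentiableAt one_ne_zero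
    exact (((hn.inv (norm_ne_zero_iff.mpr hw0)).smul differentiableAt_id).sub
      (differentiableAt_const _)).norm_sq ℝ
  have hdiff : DifferentiableAt ℝ phiProj w := heq.differentiableAt_iff.mpr hdiff2
  refine ⟨hdiff, ?_⟩
  -- gradient vs fderiv
  have hgrad := hdiff.hasGradientAt.hasFDerivAt
  -- φ is constant along the ray through w, near t = 1
  have hray : (fun t : ℝ => phiProj (t • w)) =ᶠ[nhds (1 : ℝ)]
      fun _ => phiProj w := by
    have h1 : ∀ᶠ t : ℝ in nhds 1, 0 < t := eventually_gt_nhds one_pos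
    have h2 : ∀ᶠ t : ℝ in nhds 1, 1 < t * ‖w‖ := by
      have : ContinuousAt (fun t : ℝ => t * ‖w‖) 1 :=
        (continuous_id.mul continuous_const).continuousAt
      have := (this : Filter.Tendsto _ _ (nhds ((1:ℝ) * ‖w‖))).eventually
        (eventually_gt_nhds (by simpa using hw))
      simpa using this
    filter_upwards [h1, h2] with t ht ht2
    have hnorm : ‖t • w‖ = t * ‖w‖ := by
      rw [norm_smul, Real.norm_eq_abs, abs_of_pos ht]
    unfold phiProj projBall
    rw [hnorm, if_neg (not_le.mpr ht2), if_neg (not_le.mpr hw)]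
    congr 2
    rw [smul_smul]; congr 2; field_simp
  -- derivative of t ↦ φ(t • w) at 1
  have hc : HasDerivAt (fun t : ℝ => t • w) w 1 := by
    simpa using (hasDerivAt_id (1 : ℝ)).smul_const w
  have hcomp : HasDerivAt (fun t : ℝ => phiProj (t • w))
      ((InnerProductSpace.toDual ℝ _ (gradient phiProj w)) w) 1 :=
    HasFDerivAt.comp_hasDerivAt (l := phiProj) (f := fun t : ℝ => t • w) (1 : ℝ)
      (show HasFDerivAt phiProj _ ((1:ℝ) • w) by rw [one_smul]; exact hgrad) hc
  have h0 : HasDerivAt (fun _ : ℝ => phiProj w)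
      ((InnerProductSpace.toDual ℝ _ (gradient phiProj w)) w) 1 :=
    hray.hasDerivAt_iff.mp hcomp
  have := h0.unique (hasDerivAt_const 1 (phiProj w))
  rw [← InnerProductSpace.toDual_apply_apply]
  exact this
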